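/- arXiv:2311.06762 — 10 statements merged into one kernel-verified Lean document; each statement's English description precedes it below -/
import Mathlib

section
/- If a pairwise comparison system is consistent, then the solution of the system w_b/w_i = a_{bi}, w_i/w_w = a_{iw}, w_b/w_w = a_{bw} with ∑ w_i = 1 and w_i > 0 is unique: any two positive weight vectors summing to 1 satisfying these ratio equations are equal. -/
theorem consistent_pcs_weights_unique (n : ℕ) (hn : 2 ≤ n) (b w : Fin n) (hbw : b ≠ w)
    (ab aw : Fin n → ℝ)
    (hab : ∀ i, 0 < ab i) (haw : ∀ i, 0 < aw i)
    (habb : ab b = 1) (haww : aw w = 1)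
    (hcons : ∀ i, ab i * aw i = ab w)
    (u v : Fin n → ℝ)
    (hu : ∀ i, 0 < u i) (hv : ∀ i, 0 < v i)
    (hus : ∑ i, u i = 1) (hvs : ∑ i, v i = 1)
    (hu1 : ∀ i, u b / u i = ab i) (hu2 : ∀ i, u i / u w = aw i) (hu3 : u b / u w = ab w)
    (hv1 : ∀ i, v b / v i = ab i) (hv2 : ∀ i, v i / v w = aw i) (hv3 : v b / v w = ab w) :
    u = v := by
  have hue : ∀ i, u i = aw i * u w := fun i => by
    have := hu2 i; rw [div_eq_iff (hu w).ne'] at this; linarith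
  have hve : ∀ i, v i = aw i * v w := fun i => by
    have := hv2 i; rw [div_eq_iff (hv w).ne'] at this; linarith
  have hsu : (∑ i, aw i) * u w = 1 := by
    rw [Finset.sum_mul, ← hus]; exact Finset.sum_congr rfl fun i _ => (hue i).symm
  have hsv : (∑ i, aw i) * v w = 1 := by
    rw [Finset.sum_mul, ← hvs]; exact Finset.sum_congr rfl fun i _ => (hve i).symm
  have hspos : 0 < ∑ i, aw i :=
    Finset.sum_pos (fun i _ => haw i) ⟨w, Finset.mem_univ w⟩
  have hw : u w = v w := by
    have := hsu.trans hsv.symm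
    exact mul_left_cancel₀ (ne_of_gt hspos) this
  funext i
  rw [hue i, hve i, hw]
end

section
/- Let positive reals ã_{bj}, ã_{jw}, ã_{bw} satisfy ã_{bj}·ã_{jw} = ã_{bw}, and let η_{bj} = max(a_{bj}/ã_{bj}, ã_{bj}/a_{bj}), η_{jw} = max(a_{jw}/ã_{jw}, ã_{jw}/a_{jw}), η_{bw} = max(a_{bw}/ã_{bw}, ã_{bw}/a_{bw}). If a_{bj}·a_{jw} > a_{bw} and ε_j = (a_{bj}·a_{jw}/a_{bw})^{1/3}, then max(η_{bj}, η_{jw}, η_{bw}) ≥ ε_j. -/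
theorem eps_lower_bound (abj ajw abw tbj tjw tbw : ℝ)
    (h1 : 0 < abj) (h2 : 0 < ajw) (h3 : 0 < abw)
    (h4 : 0 < tbj) (h5 : 0 < tjw) (h6 : 0 < tbw)
    (hcons : tbj * tjw = tbw)
    (hgt : abw < abj * ajw) :
    (abj * ajw / abw) ^ ((1 : ℝ) / 3) ≤
      max (max (abj / tbj) (tbj / abj)) (max (max (ajw / tjw) (tjw / ajw))
        (max (abw / tbw) (tbw / abw))) := by
  set η := max (max (abj / tbj) (tbj / abj)) (max (max (ajw / tjw) (tjw / ajw))
      (max (abw / tbw) (tbw / abw))) with hη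
  have ha : abj / tbj ≤ η := le_max_of_le_left (le_max_left _ _)
  have hb : ajw / tjw ≤ η := le_max_of_le_right (le_max_of_le_left (le_max_left _ _))
  have hc : tbw / abw ≤ η := le_max_of_le_right (le_max_of_le_right (le_max_right _ _))
  have hηpos : 0 < η := lt_of_lt_of_le (div_pos h1 h4) ha
  have hr : 0 < abj * ajw / abw := div_pos (mul_pos h1 h2) h3
  have key : abj * ajw / abw ≤ η ^ (3 : ℕ) := by
    have : abj * ajw / abw = (abj / tbj) * (ajw / tjw) * (tbw / abw) := by
      field_simp
      rw [← hcons]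
    rw [this, pow_succ, pow_two]
    exact mul_le_mul (mul_le_mul ha hb (le_of_lt (div_pos h2 h5)) hηpos.le)
      hc (le_of_lt (div_pos h6 h3)) (mul_pos hηpos hηpos).le
  calc (abj * ajw / abw) ^ ((1 : ℝ) / 3)
      ≤ (η ^ (3 : ℕ)) ^ ((1 : ℝ) / 3) := Real.rpow_le_rpow hr.le key (by norm_num)
    _ = η := by
        rw [← Real.rpow_natCast η 3, ← Real.rpow_mul hηpos.le]
        norm_num
end

section
/- Let positive reals ã_{bj}, ã_{jw}, ã_{bw} satisfy ã_{bj}·ã_{jw} = ã_{bw}. Then for ε_j = max(a_{bj}·a_{jw}/a_{bw}, a_{bw}/(a_{bj}·a_{jw}))^{1/3}, at least one of the six ratios a_{bj}/ã_{bj}, ã_{bj}/a_{bj}, a_{jw}/ã_{jw}, ã_{jw}/a_{jw}, a_{bw}/ã_{bw}, ã_{bw}/a_{bw} is at least ε_j. -/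
theorem eps_j_le_max_ratios (abj ajw abw tbj tjw tbw : ℝ)
    (h1 : 0 < abj) (h2 : 0 < ajw) (h3 : 0 < abw)
    (h4 : 0 < tbj) (h5 : 0 < tjw) (h6 : 0 < tbw)
    (hcons : tbj * tjw = tbw) :
    (max (abj * ajw / abw) (abw / (abj * ajw))) ^ ((1 : ℝ) / 3) ≤
      max (max (abj / tbj) (tbj / abj)) (max (max (ajw / tjw) (tjw / ajw))
        (max (abw / tbw) (tbw / abw))) := by
  set M := max (max (abj / tbj) (tbj / abj)) (max (max (ajw / tjw) (tjw / ajw))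
        (max (abw / tbw) (tbw / abw))) with hM
  have hM1 : 1 ≤ M := by
    rcases le_total abj tbj with h | h
    · have : (1:ℝ) ≤ tbj / abj := (one_le_div h1).2 h
      exact this.trans (le_max_of_le_left (le_max_right _ _))
    · have : (1:ℝ) ≤ abj / tbj := (one_le_div h4).2 h
      exact this.trans (le_max_of_le_left (le_max_left _ _))
  have hM0 : (0:ℝ) ≤ M := by linarith
  have e1 : abj / tbj ≤ M := le_max_of_le_left (le_max_left _ _)
  have e1' : tbj / abj ≤ M := le_max_of_le_left (le_max_right _ _)
  have e2 : ajw / tjw ≤ M := le_max_of_le_right (le_max_of_le_left (le_max_left _ _))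
  have e2' : tjw / ajw ≤ M := le_max_of_le_right (le_max_of_le_left (le_max_right _ _))
  have e3 : abw / tbw ≤ M := le_max_of_le_right (le_max_of_le_right (le_max_left _ _))
  have e3' : tbw / abw ≤ M := le_max_of_le_right (le_max_of_le_right (le_max_right _ _))
  have key : max (abj * ajw / abw) (abw / (abj * ajw)) ≤ M ^ 3 := by
    have hA : abj * ajw / abw = (abj / tbj) * (ajw / tjw) * (tbw / abw) := by
      field_simp
      rw [← hcons]
    have hB : abw / (abj * ajw) = (tbj / abj) * (tjw / ajw) * (abw / tbw) := by
      field_simp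
      rw [← hcons]
    apply max_le
    · rw [hA]
      calc (abj / tbj) * (ajw / tjw) * (tbw / abw) ≤ M * M * M := by
            apply mul_le_mul _ e3' (by positivity) (by positivity)
            exact mul_le_mul e1 e2 (by positivity) hM0
        _ = M ^ 3 := by ring
    · rw [hB]
      calc (tbj / abj) * (tjw / ajw) * (abw / tbw) ≤ M * M * M := by
            apply mul_le_mul _ e3 (by positivity) (by positivity)
            exact mul_le_mul e1' e2' (by positivity) hM0
        _ = M ^ 3 := by ring
  have h0 : (0:ℝ) ≤ max (abj * ajw / abw) (abw / (abj * ajw)) := by positivity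
  calc (max (abj * ajw / abw) (abw / (abj * ajw))) ^ ((1:ℝ)/3)
      ≤ (M ^ 3) ^ ((1:ℝ)/3) := Real.rpow_le_rpow h0 key (by norm_num)
    _ = M := by
        rw [← Real.rpow_natCast M 3, ← Real.rpow_mul hM0]
        norm_num
end

section
/- Let positive reals ã_{bi}, ã_{iw}, ã_{bj}, ã_{jw}, ã_{bw} satisfy ã_{bi}·ã_{iw} = ã_{bw} and ã_{bj}·ã_{jw} = ã_{bw}, and let ε_{i,j} = max(a_{bi}·a_{iw}/(a_{bj}·a_{jw}), a_{bj}·a_{jw}/(a_{bi}·a_{iw}))^{1/4}. Then the maximum of the eight ratios a_{bi}/ã_{bi}, ã_{bi}/a_{bi}, a_{iw}/ã_{iw}, ã_{iw}/a_{iw}, a_{bj}/ã_{bj}, ã_{bj}/a_{bj}, a_{jw}/ã_{jw}, ã_{jw}/a_{jw} is at least ε_{i,j}. -/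
private lemma prod4_le {a b c d M : ℝ} (ha : 0 < a) (hb : 0 < b) (hc : 0 < c) (hd : 0 < d)
    (h1 : a ≤ M) (h2 : b ≤ M) (h3 : c ≤ M) (h4 : d ≤ M) : a * b * c * d ≤ M ^ 4 := by
  nlinarith [mul_le_mul h1 h2 hb.le (ha.le.trans h1), mul_le_mul h3 h4 hd.le (hc.le.trans h3),
    mul_pos ha hb, mul_pos hc hd, sq_nonneg (M*M)]

theorem eps_ij_le_max_ratios (abi aiw abj ajw : ℝ) (tbi tiw tbj tjw tbw : ℝ)
    (h1 : 0 < abi) (h2 : 0 < aiw) (h3 : 0 < abj) (h4 : 0 < ajw)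
    (h5 : 0 < tbi) (h6 : 0 < tiw) (h7 : 0 < tbj) (h8 : 0 < tjw) (h9 : 0 < tbw)
    (hconsi : tbi * tiw = tbw) (hconsj : tbj * tjw = tbw) :
    (max (abi * aiw / (abj * ajw)) (abj * ajw / (abi * aiw))) ^ ((1 : ℝ) / 4) ≤
      max (max (max (abi / tbi) (tbi / abi)) (max (aiw / tiw) (tiw / aiw)))
        (max (max (abj / tbj) (tbj / abj)) (max (ajw / tjw) (tjw / ajw))) := by
  set M := max (max (max (abi / tbi) (tbi / abi)) (max (aiw / tiw) (tiw / aiw)))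
        (max (max (abj / tbj) (tbj / abj)) (max (ajw / tjw) (tjw / ajw))) with hM
  have hMpos : 0 < M := lt_of_lt_of_le (div_pos h1 h5)
    (le_max_of_le_left (le_max_of_le_left (le_max_left _ _)))
  have e1 : abi / tbi ≤ M := le_max_of_le_left (le_max_of_le_left (le_max_left _ _))
  have e2 : tbi / abi ≤ M := le_max_of_le_left (le_max_of_le_left (le_max_right _ _))
  have e3 : aiw / tiw ≤ M := le_max_of_le_left (le_max_of_le_right (le_max_left _ _))
  have e4 : tiw / aiw ≤ M := le_max_of_le_left (le_max_of_le_right (le_max_right _ _))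
  have e5 : abj / tbj ≤ M := le_max_of_le_right (le_max_of_le_left (le_max_left _ _))
  have e6 : tbj / abj ≤ M := le_max_of_le_right (le_max_of_le_left (le_max_right _ _))
  have e7 : ajw / tjw ≤ M := le_max_of_le_right (le_max_of_le_right (le_max_left _ _))
  have e8 : tjw / ajw ≤ M := le_max_of_le_right (le_max_of_le_right (le_max_right _ _))
  have key1 : abi * aiw / (abj * ajw) ≤ M ^ 4 := by
    have h := prod4_le (div_pos h1 h5) (div_pos h2 h6) (div_pos h7 h3) (div_pos h8 h4)
      e1 e3 e6 e8
    have heq : abi / tbi * (aiw / tiw) * (tbj / abj) * (tjw / ajw)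
        = abi * aiw / (abj * ajw) * (tbj * tjw / (tbi * tiw)) := by
      field_simp
    rw [heq, hconsi, hconsj, div_self h9.ne', mul_one] at h
    exact h
  have key2 : abj * ajw / (abi * aiw) ≤ M ^ 4 := by
    have h := prod4_le (div_pos h3 h7) (div_pos h4 h8) (div_pos h5 h1) (div_pos h6 h2)
      e5 e7 e2 e4
    have heq : abj / tbj * (ajw / tjw) * (tbi / abi) * (tiw / aiw)
        = abj * ajw / (abi * aiw) * (tbi * tiw / (tbj * tjw)) := by
      field_simp
    rw [heq, hconsi, hconsj, div_self h9.ne', mul_one] at h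
    exact h
  have hmax : max (abi * aiw / (abj * ajw)) (abj * ajw / (abi * aiw)) ≤ M ^ 4 :=
    max_le key1 key2
  have hmaxpos : 0 < max (abi * aiw / (abj * ajw)) (abj * ajw / (abi * aiw)) :=
    lt_max_of_lt_left (div_pos (mul_pos h1 h2) (mul_pos h3 h4))
  calc (max (abi * aiw / (abj * ajw)) (abj * ajw / (abi * aiw))) ^ ((1 : ℝ) / 4)
      ≤ (M ^ 4) ^ ((1 : ℝ) / 4) := by
        apply Real.rpow_le_rpow hmaxpos.le hmax (by norm_num)
    _ = M := by
        rw [← Real.rpow_natCast M 4, ← Real.rpow_mul hMpos.le]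
        norm_num
end

section
/- Suppose for all i in D, a_{bi}·a_{iw} ≥ a_{bw}/ε³ where ε = ε_{j_0} = (a_{bj_0}·a_{j_0w}/a_{bw})^{1/3} ≥ 1 and a_{bj_0}·a_{j_0w} ≥ a_{bi}·a_{iw} for all i ∈ D, and max over i,j of ε_i, ε_{i,j} equals ε_{j_0}. Define ã_{bi} = (ε·a_{bi}·a_{bw}/a_{iw})^{1/2}, ã_{iw} = (ε·a_{iw}·a_{bw}/a_{bi})^{1/2}, ã_{bw} = ε·a_{bw}. Then ã_{bi}·ã_{iw} = ã_{bw} for all i ∈ D, and all the ratios a_{bi}/ã_{bi}, ã_{bi}/a_{bi}, a_{iw}/ã_{iw}, ã_{iw}/a_{iw}, a_{bw}/ã_{bw}, ã_{bw}/a_{bw} are at most ε. -/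
private lemma ratio_le' (a t ε : ℝ) (ha : 0 < a) (ht : 0 < t) (hε : 0 < ε)
    (h : a ^ 2 ≤ ε ^ 2 * t ^ 2) : a / t ≤ ε := by
  rw [div_le_iff₀ ht]
  nlinarith [mul_pos hε ht]

theorem optimal_modification_case_j0 {ι : Type*} (D : Finset ι)
    (ab aw : ι → ℝ) (abw : ℝ) (j0 : ι) (hj0 : j0 ∈ D)
    (hab : ∀ i ∈ D, 0 < ab i) (haw : ∀ i ∈ D, 0 < aw i) (habw : 0 < abw)
    (ε : ℝ) (hε : ε = (ab j0 * aw j0 / abw) ^ ((1 : ℝ) / 3)) (hε1 : 1 ≤ ε)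
    (hlow : ∀ i ∈ D, abw / ε ^ (3 : ℕ) ≤ ab i * aw i)
    (hmax : ∀ i ∈ D, ab i * aw i ≤ ab j0 * aw j0)
    (hmaxeps : ∀ i ∈ D,
      (max (ab i * aw i / abw) (abw / (ab i * aw i))) ^ ((1 : ℝ) / 3) ≤ ε ∧
      ∀ j ∈ D, (max (ab i * aw i / (ab j * aw j))
        (ab j * aw j / (ab i * aw i))) ^ ((1 : ℝ) / 4) ≤ ε)
    (tb tw : ι → ℝ) (tbw : ℝ)
    (htb : ∀ i ∈ D, tb i = (ε * ab i * abw / aw i) ^ ((1 : ℝ) / 2))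
    (htw : ∀ i ∈ D, tw i = (ε * aw i * abw / ab i) ^ ((1 : ℝ) / 2))
    (htbw : tbw = ε * abw) :
    (∀ i ∈ D, tb i * tw i = tbw) ∧
    (∀ i ∈ D, ab i / tb i ≤ ε ∧ tb i / ab i ≤ ε ∧
      aw i / tw i ≤ ε ∧ tw i / aw i ≤ ε) ∧
    abw / tbw ≤ ε ∧ tbw / abw ≤ ε := by
  have hε0 : 0 < ε := lt_of_lt_of_le one_pos hε1
  have hj0b := hab j0 hj0
  have hj0w := haw j0 hj0
  have hqpos : 0 < ab j0 * aw j0 / abw := by positivity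
  have hε3 : ε ^ (3 : ℕ) = ab j0 * aw j0 / abw := by
    rw [hε, ← Real.rpow_natCast ((ab j0 * aw j0 / abw) ^ ((1:ℝ)/3)) 3,
      ← Real.rpow_mul hqpos.le]
    norm_num
  have hε3' : ab j0 * aw j0 = ε ^ 3 * abw := by
    field_simp at hε3; linarith [hε3]
  -- key facts per i
  have key : ∀ i ∈ D, ab i * aw i ≤ ε ^ 3 * abw ∧ abw ≤ ε * (ab i * aw i) := by
    intro i hi
    have hbi := hab i hi
    have hwi := haw i hi
    have hprod : 0 < ab i * aw i := mul_pos hbi hwi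
    constructor
    · calc ab i * aw i ≤ ab j0 * aw j0 := hmax i hi
        _ = ε ^ 3 * abw := hε3'
    · have hm := (hmaxeps i hi).2 j0 hj0
      set M := max (ab i * aw i / (ab j0 * aw j0)) (ab j0 * aw j0 / (ab i * aw i)) with hM
      have hMnn : 0 ≤ M := le_max_of_le_left (by positivity)
      have hM4 : (M ^ ((1:ℝ)/4)) ^ (4:ℕ) = M := by
        rw [← Real.rpow_natCast (M ^ ((1:ℝ)/4)) 4, ← Real.rpow_mul hMnn]
        norm_num
      have hMle : M ≤ ε ^ (4:ℕ) := by
        rw [← hM4]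
        exact pow_le_pow_left₀ (Real.rpow_nonneg hMnn _) hm 4
      have hB : ab j0 * aw j0 / (ab i * aw i) ≤ ε ^ 4 := le_trans (le_max_right _ _) hMle
      rw [div_le_iff₀ hprod, hε3'] at hB
      nlinarith [pow_pos hε0 3]
  refine ⟨?_, ?_, ?_, ?_⟩
  · intro i hi
    have hbi := hab i hi
    have hwi := haw i hi
    have hX : (0:ℝ) ≤ ε * ab i * abw / aw i := by positivity
    have hY : (0:ℝ) ≤ ε * aw i * abw / ab i := by positivity
    rw [htb i hi, htw i hi, htbw, ← Real.sqrt_eq_rpow, ← Real.sqrt_eq_rpow,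
      ← Real.sqrt_mul hX]
    have hprod : ε * ab i * abw / aw i * (ε * aw i * abw / ab i) = (ε * abw) ^ 2 := by
      field_simp
    rw [hprod, Real.sqrt_sq (by positivity)]
  · intro i hi
    have hbi := hab i hi
    have hwi := haw i hi
    obtain ⟨h1, h2⟩ := key i hi
    have hX : (0:ℝ) < ε * ab i * abw / aw i := by positivity
    have hY : (0:ℝ) < ε * aw i * abw / ab i := by positivity
    have htbpos : 0 < tb i := by rw [htb i hi]; positivity
    have htwpos : 0 < tw i := by rw [htw i hi]; positivity
    have htbsq : tb i ^ 2 = ε * ab i * abw / aw i := by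
      rw [htb i hi, ← Real.rpow_natCast _ 2, ← Real.rpow_mul hX.le]
      norm_num
    have htwsq : tw i ^ 2 = ε * aw i * abw / ab i := by
      rw [htw i hi, ← Real.rpow_natCast _ 2, ← Real.rpow_mul hY.le]
      norm_num
    refine ⟨ratio_le' _ _ _ hbi htbpos hε0 ?_, ratio_le' _ _ _ htbpos hbi hε0 ?_,
      ratio_le' _ _ _ hwi htwpos hε0 ?_, ratio_le' _ _ _ htwpos hwi hε0 ?_⟩
    · rw [htbsq, mul_div_assoc', le_div_iff₀ hwi]; nlinarith
    · rw [htbsq, div_le_iff₀ hwi]; nlinarith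
    · rw [htwsq, mul_div_assoc', le_div_iff₀ hbi]; nlinarith
    · rw [htwsq, div_le_iff₀ hbi]; nlinarith
  · rw [htbw, div_le_iff₀ (by positivity)]
    nlinarith [mul_le_mul hε1 hε1 zero_le_one hε0.le]
  · rw [htbw, mul_div_assoc, div_self habw.ne', mul_one]
end

section
/- Let ε* denote the optimal value of the weight-based minimax problem (minimizing the maximum of ratios a_{bi}/(w_b/w_i), (w_b/w_i)/a_{bi}, a_{iw}/(w_i/w_w), (w_i/w_w)/a_{iw}, a_{bw}/(w_b/w_w), (w_b/w_w)/a_{bw} over positive normalized weights), and let η* denote the optimal value of the modification-based problem (minimizing the maximum deviation ratio over consistent modified systems ã with ã_{bi}·ã_{iw} = ã_{bw}). Then ε* = η*. -/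
theorem weight_and_modification_problems_equivalent
    {ι : Type*} [DecidableEq ι] (D : Finset ι) (b w : ι)
    (hb : b ∉ D) (hw : w ∉ D) (hbw : b ≠ w)
    (ab aw : ι → ℝ) (abw : ℝ)
    (hab : ∀ i ∈ D, 0 < ab i) (haw : ∀ i ∈ D, 0 < aw i) (habw : 0 < abw) :
    sInf {e : ℝ | ∃ wv : ι → ℝ,
        (∀ k ∈ insert b (insert w D), 0 < wv k) ∧
        (∑ k ∈ insert b (insert w D), wv k) = 1 ∧
        (∀ i ∈ D, ab i / (wv b / wv i) ≤ e ∧ (wv b / wv i) / ab i ≤ e ∧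
          aw i / (wv i / wv w) ≤ e ∧ (wv i / wv w) / aw i ≤ e) ∧
        abw / (wv b / wv w) ≤ e ∧ (wv b / wv w) / abw ≤ e} =
    sInf {e : ℝ | ∃ tb tw : ι → ℝ, ∃ tbw : ℝ,
        (∀ i ∈ D, 0 < tb i) ∧ (∀ i ∈ D, 0 < tw i) ∧ 0 < tbw ∧
        (∀ i ∈ D, tb i * tw i = tbw) ∧
        (∀ i ∈ D, ab i / tb i ≤ e ∧ tb i / ab i ≤ e ∧
          aw i / tw i ≤ e ∧ tw i / aw i ≤ e) ∧
        abw / tbw ≤ e ∧ tbw / abw ≤ e} := by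
  congr 1
  ext e
  simp only [Set.mem_setOf_eq]
  constructor
  · rintro ⟨wv, hpos, hsum, hD, hb1, hb2⟩
    refine ⟨fun i => wv b / wv i, fun i => wv i / wv w, wv b / wv w,
      ?_, ?_, ?_, ?_, hD, hb1, hb2⟩
    · intro i hi
      exact div_pos (hpos b (by simp)) (hpos i (by simp [hi]))
    · intro i hi
      exact div_pos (hpos i (by simp [hi])) (hpos w (by simp))
    · exact div_pos (hpos b (by simp)) (hpos w (by simp))
    · intro i hi
      have h1 : wv i ≠ 0 := ne_of_gt (hpos i (by simp [hi]))
      field_simp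
  · rintro ⟨tb, tw, tbw, htb, htw, htbw, hcons, hD, hb1, hb2⟩
    have hsum0 : 0 ≤ ∑ i ∈ D, tw i := Finset.sum_nonneg fun i hi => (htw i hi).le
    set S : ℝ := tbw + 1 + ∑ i ∈ D, tw i with hS
    have hSpos : 0 < S := by positivity
    set c : ℝ := S⁻¹ with hc
    have hcpos : 0 < c := inv_pos.mpr hSpos
    refine ⟨fun k => if k = b then c * tbw else if k = w then c else c * tw k,
      ?_, ?_, ?_, ?_, ?_⟩
    · intro k hk
      by_cases h1 : k = b
      · simp [h1]; positivity
      · by_cases h2 : k = w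
        · simp [h1, h2]; positivity
        · have hkD : k ∈ D := by
            simp only [Finset.mem_insert] at hk
            tauto
          simp only [h1, h2, if_false]
          exact mul_pos hcpos (htw k hkD)
    · rw [Finset.sum_insert (by simp [hbw, hb]),
        Finset.sum_insert hw]
      have : ∑ i ∈ D, (if i = b then c * tbw else if i = w then c else c * tw i)
          = ∑ i ∈ D, c * tw i := by
        apply Finset.sum_congr rfl
        intro i hi
        have h1 : i ≠ b := fun h => hb (h ▸ hi)
        have h2 : i ≠ w := fun h => hw (h ▸ hi)
        simp [h1, h2]
      rw [this]
      simp only [if_pos rfl, if_true, if_neg hbw, if_neg (Ne.symm hbw)]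
      rw [← Finset.mul_sum]
      have h4 : c * tbw + (c + c * ∑ i ∈ D, tw i) = c * S := by ring
      rw [h4, hc, inv_mul_cancel₀ (ne_of_gt hSpos)]
    · intro i hi
      have h1 : i ≠ b := fun h => hb (h ▸ hi)
      have h2 : i ≠ w := fun h => hw (h ▸ hi)
      have htwi := htw i hi
      have hcon := hcons i hi
      have htbi : tb i = tbw / tw i := by
        rw [eq_div_iff (ne_of_gt htwi)]; exact hcon
      simp only [if_pos rfl, if_true, if_neg h1, if_neg h2, if_neg hbw,
        if_neg (Ne.symm hbw)]
      have e1 : c * tbw / (c * tw i) = tb i := by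
        rw [htbi]; field_simp [ne_of_gt hcpos]
      have e2 : c * tw i / c = tw i := by
        field_simp
      rw [e1, e2]
      exact hD i hi
    · have e3 : (if b = b then c * tbw else if b = w then c else c * tw b) /
          (if w = b then c * tbw else if w = w then c else c * tw w) = tbw := by
        simp only [if_pos rfl, if_true, if_neg (Ne.symm hbw)]
        field_simp
      rw [e3]
      exact hb1
    · have e3 : (if b = b then c * tbw else if b = w then c else c * tw b) /
          (if w = b then c * tbw else if w = w then c else c * tw w) = tbw := by
        simp only [if_pos rfl, if_true, if_neg (Ne.symm hbw)]
        field_simp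
      rw [e3]
      exact hb2
end

section
/- The optimal objective value satisfies ε* = max over i, j ∈ D of the four quantities (a_{bi}·a_{iw}/a_{bw})^{1/3}, (a_{bw}/(a_{bi}·a_{iw}))^{1/3}, (a_{bi}·a_{iw}/(a_{bj}·a_{jw}))^{1/4}, (a_{bj}·a_{jw}/(a_{bi}·a_{iw}))^{1/4}. -/
private lemma pow_third_iff (x e : ℝ) (hx : 0 ≤ x) (he : 0 ≤ e) :
    x ^ ((1 : ℝ) / 3) ≤ e ↔ x ≤ e ^ 3 := by
  rw [one_div, Real.rpow_inv_le_iff_of_pos hx he (by norm_num : (0:ℝ) < 3),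
    show (3:ℝ) = ((3:ℕ):ℝ) by norm_num, Real.rpow_natCast]

private lemma pow_fourth_iff (x e : ℝ) (hx : 0 ≤ x) (he : 0 ≤ e) :
    x ^ ((1 : ℝ) / 4) ≤ e ↔ x ≤ e ^ 4 := by
  rw [one_div, Real.rpow_inv_le_iff_of_pos hx he (by norm_num : (0:ℝ) < 4),
    show (4:ℝ) = ((4:ℕ):ℝ) by norm_num, Real.rpow_natCast]

theorem analytic_form_of_optimal_value
    {ι : Type*} (D : Finset ι) (hD : D.Nonempty)
    (ab aw : ι → ℝ) (abw : ℝ)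
    (hab : ∀ i ∈ D, 0 < ab i) (haw : ∀ i ∈ D, 0 < aw i) (habw : 0 < abw) :
    sInf {e : ℝ | ∃ tb tw : ι → ℝ, ∃ tbw : ℝ,
        (∀ i ∈ D, 0 < tb i) ∧ (∀ i ∈ D, 0 < tw i) ∧ 0 < tbw ∧
        (∀ i ∈ D, tb i * tw i = tbw) ∧
        (∀ i ∈ D, ab i / tb i ≤ e ∧ tb i / ab i ≤ e ∧
          aw i / tw i ≤ e ∧ tw i / aw i ≤ e) ∧
        abw / tbw ≤ e ∧ tbw / abw ≤ e} =
    D.sup' hD (fun i =>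
      max ((ab i * aw i / abw) ^ ((1 : ℝ) / 3))
        (max ((abw / (ab i * aw i)) ^ ((1 : ℝ) / 3))
          (D.sup' hD (fun j =>
            max ((ab i * aw i / (ab j * aw j)) ^ ((1 : ℝ) / 4))
              ((ab j * aw j / (ab i * aw i)) ^ ((1 : ℝ) / 4)))))) := by
  have hppos : ∀ i ∈ D, 0 < ab i * aw i := fun i hi => mul_pos (hab i hi) (haw i hi)
  set f : ι → ℝ := fun i =>
      max ((ab i * aw i / abw) ^ ((1 : ℝ) / 3))
        (max ((abw / (ab i * aw i)) ^ ((1 : ℝ) / 3))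
          (D.sup' hD (fun j =>
            max ((ab i * aw i / (ab j * aw j)) ^ ((1 : ℝ) / 4))
              ((ab j * aw j / (ab i * aw i)) ^ ((1 : ℝ) / 4))))) with hf
  set M : ℝ := D.sup' hD f with hMdef
  -- basic facts about M
  obtain ⟨i0, hi0⟩ := hD
  have hM1 : 1 ≤ M := by
    have h1 : ((ab i0 * aw i0 / (ab i0 * aw i0)) ^ ((1 : ℝ) / 4)) = 1 := by
      rw [div_self (hppos i0 hi0).ne', Real.one_rpow]
    have h2 : ((ab i0 * aw i0 / (ab i0 * aw i0)) ^ ((1 : ℝ) / 4)) ≤ M := by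
      calc ((ab i0 * aw i0 / (ab i0 * aw i0)) ^ ((1 : ℝ) / 4))
          ≤ max ((ab i0 * aw i0 / (ab i0 * aw i0)) ^ ((1 : ℝ) / 4))
              ((ab i0 * aw i0 / (ab i0 * aw i0)) ^ ((1 : ℝ) / 4)) := le_max_left _ _
        _ ≤ D.sup' ⟨i0, hi0⟩ (fun j =>
            max ((ab i0 * aw i0 / (ab j * aw j)) ^ ((1 : ℝ) / 4))
              ((ab j * aw j / (ab i0 * aw i0)) ^ ((1 : ℝ) / 4))) :=
            Finset.le_sup' (fun j => max ((ab i0 * aw i0 / (ab j * aw j)) ^ ((1 : ℝ) / 4))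
              ((ab j * aw j / (ab i0 * aw i0)) ^ ((1 : ℝ) / 4))) hi0
        _ ≤ f i0 := le_max_of_le_right (le_max_right _ _)
        _ ≤ M := Finset.le_sup' f hi0
    linarith [h1 ▸ h2]
  have hMpos : 0 < M := lt_of_lt_of_le one_pos hM1
  have hA : ∀ i ∈ D, ab i * aw i / abw ≤ M ^ 3 := by
    intro i hi
    have h : (ab i * aw i / abw) ^ ((1 : ℝ) / 3) ≤ M :=
      le_trans (le_max_left _ _) (Finset.le_sup' f hi)
    exact (pow_third_iff _ _ (div_nonneg (hppos i hi).le habw.le) hMpos.le).mp h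
  have hB : ∀ i ∈ D, abw / (ab i * aw i) ≤ M ^ 3 := by
    intro i hi
    have h : (abw / (ab i * aw i)) ^ ((1 : ℝ) / 3) ≤ M :=
      le_trans (le_max_of_le_right (le_max_left _ _)) (Finset.le_sup' f hi)
    exact (pow_third_iff _ _ (div_nonneg habw.le (hppos i hi).le) hMpos.le).mp h
  have hC : ∀ i ∈ D, ∀ j ∈ D, ab i * aw i / (ab j * aw j) ≤ M ^ 4 := by
    intro i hi j hj
    have h : (ab i * aw i / (ab j * aw j)) ^ ((1 : ℝ) / 4) ≤ M := by
      calc (ab i * aw i / (ab j * aw j)) ^ ((1 : ℝ) / 4)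
          ≤ max ((ab i * aw i / (ab j * aw j)) ^ ((1 : ℝ) / 4))
              ((ab j * aw j / (ab i * aw i)) ^ ((1 : ℝ) / 4)) := le_max_left _ _
        _ ≤ D.sup' ⟨i0, hi0⟩ (fun j =>
            max ((ab i * aw i / (ab j * aw j)) ^ ((1 : ℝ) / 4))
              ((ab j * aw j / (ab i * aw i)) ^ ((1 : ℝ) / 4))) :=
            Finset.le_sup' (fun j => max ((ab i * aw i / (ab j * aw j)) ^ ((1 : ℝ) / 4))
              ((ab j * aw j / (ab i * aw i)) ^ ((1 : ℝ) / 4))) hj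
        _ ≤ f i := le_max_of_le_right (le_max_right _ _)
        _ ≤ M := Finset.le_sup' f hi
    exact (pow_fourth_iff _ _ (div_nonneg (hppos i hi).le (hppos j hj).le) hMpos.le).mp h
  -- construct the optimal feasible point, showing M is in the set
  set P : ℝ := D.sup' ⟨i0, hi0⟩ (fun i => ab i * aw i) with hP
  set tbw : ℝ := max (abw / M) (P / M ^ 2) with htbwdef
  have h1 : abw / M ≤ tbw := le_max_left _ _
  have htbwpos : 0 < tbw := lt_of_lt_of_le (div_pos habw hMpos) h1
  have habove : ∀ i ∈ D, ab i * aw i / M ^ 2 ≤ tbw := by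
    intro i hi
    refine le_trans ?_ (le_max_right _ _)
    exact div_le_div_of_nonneg_right (Finset.le_sup' (fun i => ab i * aw i) hi) (by positivity)
  have h2 : tbw ≤ abw * M := by
    refine max_le ?_ ?_
    · rw [div_le_iff₀ hMpos]
      have hMM : (1:ℝ) ≤ M * M := by nlinarith
      nlinarith [mul_le_mul_of_nonneg_left hMM habw.le]
    · rw [div_le_iff₀ (by positivity : (0:ℝ) < M ^ 2)]
      have : P ≤ abw * M ^ 3 := by
        refine Finset.sup'_le _ _ fun i hi => ?_
        have := hA i hi
        rw [div_le_iff₀ habw] at this; linarith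
      nlinarith
  have h3 : ∀ j ∈ D, tbw ≤ ab j * aw j * M ^ 2 := by
    intro j hj
    refine max_le ?_ ?_
    · rw [div_le_iff₀ hMpos]
      have := hB j hj
      rw [div_le_iff₀ (hppos j hj)] at this
      nlinarith [hppos j hj]
    · rw [div_le_iff₀ (by positivity : (0:ℝ) < M ^ 2)]
      have : P ≤ ab j * aw j * M ^ 4 := by
        refine Finset.sup'_le _ _ fun i hi => ?_
        have := hC i hi j hj
        rw [div_le_iff₀ (hppos j hj)] at this; linarith
      nlinarith
  have hMmem : M ∈ {e : ℝ | ∃ tb tw : ι → ℝ, ∃ tbw : ℝ,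
        (∀ i ∈ D, 0 < tb i) ∧ (∀ i ∈ D, 0 < tw i) ∧ 0 < tbw ∧
        (∀ i ∈ D, tb i * tw i = tbw) ∧
        (∀ i ∈ D, ab i / tb i ≤ e ∧ tb i / ab i ≤ e ∧
          aw i / tw i ≤ e ∧ tw i / aw i ≤ e) ∧
        abw / tbw ≤ e ∧ tbw / abw ≤ e} := by
    refine ⟨fun i => ab i * Real.sqrt (tbw / (ab i * aw i)),
      fun i => aw i * Real.sqrt (tbw / (ab i * aw i)), tbw, ?_, ?_, htbwpos, ?_, ?_, ?_, ?_⟩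
    · intro i hi
      exact mul_pos (hab i hi) (Real.sqrt_pos.mpr (div_pos htbwpos (hppos i hi)))
    · intro i hi
      exact mul_pos (haw i hi) (Real.sqrt_pos.mpr (div_pos htbwpos (hppos i hi)))
    · intro i hi
      have hs : Real.sqrt (tbw / (ab i * aw i)) * Real.sqrt (tbw / (ab i * aw i))
          = tbw / (ab i * aw i) :=
        Real.mul_self_sqrt (div_nonneg htbwpos.le (hppos i hi).le)
      calc ab i * Real.sqrt (tbw / (ab i * aw i)) * (aw i * Real.sqrt (tbw / (ab i * aw i)))
          = (ab i * aw i) * (Real.sqrt (tbw / (ab i * aw i)) *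
              Real.sqrt (tbw / (ab i * aw i))) := by ring
        _ = (ab i * aw i) * (tbw / (ab i * aw i)) := by rw [hs]
        _ = tbw := by rw [mul_comm, div_mul_cancel₀ _ (hppos i hi).ne']
    · intro i hi
      set s : ℝ := Real.sqrt (tbw / (ab i * aw i)) with hs
      have hspos : 0 < s := Real.sqrt_pos.mpr (div_pos htbwpos (hppos i hi))
      have hsle : s ≤ M := by
        have hle : tbw / (ab i * aw i) ≤ M ^ 2 :=
          (div_le_iff₀ (hppos i hi)).mpr (by nlinarith [h3 i hi])
        calc s ≤ Real.sqrt (M ^ 2) := Real.sqrt_le_sqrt hle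
          _ = M := Real.sqrt_sq hMpos.le
      have hsge : 1 ≤ M * s := by
        have hle : (1 / M) ^ 2 ≤ tbw / (ab i * aw i) := by
          have hab2 : ab i * aw i ≤ tbw * M ^ 2 :=
            (div_le_iff₀ (by positivity : (0:ℝ) < M ^ 2)).mp (habove i hi)
          rw [div_pow, one_pow, div_le_div_iff₀ (by positivity) (hppos i hi)]
          nlinarith
        have : 1 / M ≤ s := by
          calc 1 / M = Real.sqrt ((1 / M) ^ 2) := (Real.sqrt_sq (by positivity)).symm
            _ ≤ s := Real.sqrt_le_sqrt hle
        rw [div_le_iff₀ hMpos] at this; linarith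
      have habi := hab i hi
      have hawi := haw i hi
      refine ⟨?_, ?_, ?_, ?_⟩
      · rw [div_le_iff₀ (mul_pos habi hspos)]; nlinarith
      · rw [div_le_iff₀ habi]; nlinarith
      · rw [div_le_iff₀ (mul_pos hawi hspos)]; nlinarith
      · rw [div_le_iff₀ hawi]; nlinarith
    · rw [div_le_iff₀ htbwpos]
      rw [div_le_iff₀ hMpos] at h1; linarith
    · rw [div_le_iff₀ habw]; linarith
  -- every feasible e is at least M
  have hlb : ∀ e ∈ {e : ℝ | ∃ tb tw : ι → ℝ, ∃ tbw : ℝ,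
        (∀ i ∈ D, 0 < tb i) ∧ (∀ i ∈ D, 0 < tw i) ∧ 0 < tbw ∧
        (∀ i ∈ D, tb i * tw i = tbw) ∧
        (∀ i ∈ D, ab i / tb i ≤ e ∧ tb i / ab i ≤ e ∧
          aw i / tw i ≤ e ∧ tw i / aw i ≤ e) ∧
        abw / tbw ≤ e ∧ tbw / abw ≤ e}, M ≤ e := by
    rintro e ⟨tb, tw, b, htb, htw, hb, hprod, hdev, hbw1, hbw2⟩
    have hepos : 0 < e := lt_of_lt_of_le (div_pos habw hb) hbw1
    have he1 : 1 ≤ e := by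
      have hx : 0 < abw / b := div_pos habw hb
      have hy : 0 < b / abw := div_pos hb habw
      have hxy : (abw / b) * (b / abw) = 1 := by field_simp
      nlinarith
    refine Finset.sup'_le _ _ fun i hi => ?_
    obtain ⟨d1, d2, d3, d4⟩ := hdev i hi
    have htbi := htb i hi
    have htwi := htw i hi
    have habi := hab i hi
    have hawi := haw i hi
    have hkey : ab i * aw i / abw = (ab i / tb i) * (aw i / tw i) * (b / abw) := by
      rw [div_mul_div_comm, hprod i hi, div_mul_div_comm]
      rw [mul_comm b abw, ← div_div]
      field_simp
    have hkey' : abw / (ab i * aw i) = (tb i / ab i) * (tw i / aw i) * (abw / b) := by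
      rw [div_mul_div_comm, hprod i hi, div_mul_div_comm]
      field_simp
    refine max_le ?_ (max_le ?_ ?_)
    · rw [pow_third_iff _ _ (by positivity) hepos.le, hkey]
      have hx : 0 < ab i / tb i := div_pos habi htbi
      have hy : 0 < aw i / tw i := div_pos hawi htwi
      have hz : 0 < b / abw := div_pos hb habw
      calc (ab i / tb i) * (aw i / tw i) * (b / abw) ≤ e * e * e := by
            exact mul_le_mul (mul_le_mul d1 d3 hy.le hepos.le) hbw2 hz.le (by positivity)
        _ = e ^ 3 := by ring
    · rw [pow_third_iff _ _ (by positivity) hepos.le, hkey']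
      have hx : 0 < tb i / ab i := div_pos htbi habi
      have hy : 0 < tw i / aw i := div_pos htwi hawi
      have hz : 0 < abw / b := div_pos habw hb
      calc (tb i / ab i) * (tw i / aw i) * (abw / b) ≤ e * e * e := by
            exact mul_le_mul (mul_le_mul d2 d4 hy.le hepos.le) hbw1 hz.le (by positivity)
        _ = e ^ 3 := by ring
    · refine Finset.sup'_le _ _ fun j hj => ?_
      obtain ⟨e1, e2, e3, e4⟩ := hdev j hj
      have htbj := htb j hj
      have htwj := htw j hj
      have habj := hab j hj
      have hawj := haw j hj
      have hkeyij : ab i * aw i / (ab j * aw j)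
          = ((ab i / tb i) * (aw i / tw i)) * ((tb j / ab j) * (tw j / aw j)) := by
        rw [div_mul_div_comm, div_mul_div_comm, div_mul_div_comm, hprod i hi, hprod j hj]
        field_simp
      have hkeyji : ab j * aw j / (ab i * aw i)
          = ((ab j / tb j) * (aw j / tw j)) * ((tb i / ab i) * (tw i / aw i)) := by
        rw [div_mul_div_comm, div_mul_div_comm, div_mul_div_comm, hprod i hi, hprod j hj]
        field_simp
      refine max_le ?_ ?_
      · rw [pow_fourth_iff _ _ (by positivity) hepos.le, hkeyij]
        have h12 : (ab i / tb i) * (aw i / tw i) ≤ e * e :=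
          mul_le_mul d1 d3 (div_pos hawi htwi).le hepos.le
        have h34 : (tb j / ab j) * (tw j / aw j) ≤ e * e :=
          mul_le_mul e2 e4 (div_pos htwj hawj).le hepos.le
        calc ((ab i / tb i) * (aw i / tw i)) * ((tb j / ab j) * (tw j / aw j))
            ≤ (e * e) * (e * e) := mul_le_mul h12 h34 (by positivity) (by positivity)
          _ = e ^ 4 := by ring
      · rw [pow_fourth_iff _ _ (by positivity) hepos.le, hkeyji]
        have h12 : (ab j / tb j) * (aw j / tw j) ≤ e * e :=
          mul_le_mul e1 e3 (div_pos hawj htwj).le hepos.le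
        have h34 : (tb i / ab i) * (tw i / aw i) ≤ e * e :=
          mul_le_mul d2 d4 (div_pos htwi hawi).le hepos.le
        calc ((ab j / tb j) * (aw j / tw j)) * ((tb i / ab i) * (tw i / aw i))
            ≤ (e * e) * (e * e) := mul_le_mul h12 h34 (by positivity) (by positivity)
          _ = e ^ 4 := by ring
  exact le_antisymm (csInf_le ⟨M, hlb⟩ hMmem) (le_csInf ⟨M, hMmem⟩ hlb)
end

section
/- If (ã*_{bo}, ã*_{ow}) is an optimally modified consistent system with optimal value η*, then for each i ∈ D, ã*_{bi} lies in the interval [max(a_{bi}/η*, ã*_{bw}/(η*·a_{iw})), min(η*·a_{bi}, η*·ã*_{bw}/a_{iw})], and ã*_{iw} = ã*_{bw}/ã*_{bi}. -/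
theorem optimal_modified_pcs_interval
    {ι : Type*} (D : Finset ι)
    (ab aw : ι → ℝ) (abw : ℝ)
    (hab : ∀ i ∈ D, 0 < ab i) (haw : ∀ i ∈ D, 0 < aw i) (habw : 0 < abw)
    (η : ℝ)
    (hη : η = sInf {e : ℝ | ∃ tb tw : ι → ℝ, ∃ tbw : ℝ,
        (∀ i ∈ D, 0 < tb i) ∧ (∀ i ∈ D, 0 < tw i) ∧ 0 < tbw ∧
        (∀ i ∈ D, tb i * tw i = tbw) ∧
        (∀ i ∈ D, ab i / tb i ≤ e ∧ tb i / ab i ≤ e ∧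
          aw i / tw i ≤ e ∧ tw i / aw i ≤ e) ∧
        abw / tbw ≤ e ∧ tbw / abw ≤ e})
    (tb tw : ι → ℝ) (tbw : ℝ)
    (htb : ∀ i ∈ D, 0 < tb i) (htw : ∀ i ∈ D, 0 < tw i) (htbw : 0 < tbw)
    (hcons : ∀ i ∈ D, tb i * tw i = tbw)
    (hach : (∀ i ∈ D, ab i / tb i ≤ η ∧ tb i / ab i ≤ η ∧
          aw i / tw i ≤ η ∧ tw i / aw i ≤ η) ∧
        abw / tbw ≤ η ∧ tbw / abw ≤ η) :
    ∀ i ∈ D, tb i ∈ Set.Icc (max (ab i / η) (tbw / (η * aw i)))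
        (min (η * ab i) (η * tbw / aw i)) ∧
      tw i = tbw / tb i := by
  intro i hi
  obtain ⟨h1, h2, h3, h4⟩ := hach.1 i hi
  have hb := htb i hi
  have hw := htw i hi
  have hab' := hab i hi
  have haw' := haw i hi
  have hc := hcons i hi
  have hη0 : 0 < η := lt_of_lt_of_le (div_pos hab' hb) h1
  have htweq : tw i = tbw / tb i := by
    field_simp [← hc, mul_comm]
    linarith [hc, mul_comm (tw i) (tb i)]
  constructor
  · constructor
    · apply max_le
      · rw [div_le_iff₀ hη0]
        rw [div_le_iff₀ hb] at h1
        linarith [h1]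
      · rw [div_le_iff₀ (by positivity)]
        rw [div_le_iff₀ haw', htweq, div_le_iff₀ hb] at h4
        nlinarith
    · apply le_min
      · rw [div_le_iff₀ hab'] at h2
        linarith
      · rw [le_div_iff₀ haw']
        rw [div_le_iff₀ hw] at h3
        nlinarith [hc]
  · exact htweq
end

section
/- Conversely, any system with ã_{bw} equal to the prescribed optimal value, ã_{bi} chosen in [max(a_{bi}/η*, ã_{bw}/(η*·a_{iw})), min(η*·a_{bi}, η*·ã_{bw}/a_{iw})] (assumed nonempty), ã_{iw} = ã_{bw}/ã_{bi}, and a_{bw}/ã_{bw} ≤ η*, ã_{bw}/a_{bw} ≤ η*, achieves a maximum deviation ratio at most η*, hence is an optimally modified system. -/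
theorem interval_choice_is_optimal
    {ι : Type*} (D : Finset ι)
    (ab aw : ι → ℝ) (abw : ℝ)
    (hab : ∀ i ∈ D, 0 < ab i) (haw : ∀ i ∈ D, 0 < aw i) (habw : 0 < abw)
    (η : ℝ) (hη1 : 1 ≤ η)
    (tb tw : ι → ℝ) (tbw : ℝ) (htbw : 0 < tbw)
    (htbwr1 : abw / tbw ≤ η) (htbwr2 : tbw / abw ≤ η)
    (htb : ∀ i ∈ D, tb i ∈ Set.Icc (max (ab i / η) (tbw / (η * aw i)))
        (min (η * ab i) (η * tbw / aw i)))
    (htw : ∀ i ∈ D, tw i = tbw / tb i) :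
    (∀ i ∈ D, tb i * tw i = tbw) ∧
    (∀ i ∈ D, ab i / tb i ≤ η ∧ tb i / ab i ≤ η ∧
      aw i / tw i ≤ η ∧ tw i / aw i ≤ η) := by
  have hη0 : (0:ℝ) < η := lt_of_lt_of_le one_pos hη1
  have key : ∀ i ∈ D, 0 < tb i := by
    intro i hi
    have h := (htb i hi).1
    have : 0 < ab i / η := div_pos (hab i hi) hη0
    exact lt_of_lt_of_le this (le_trans (le_max_left _ _) h)
  constructor
  · intro i hi
    rw [htw i hi]
    exact mul_div_cancel₀ tbw (ne_of_gt (key i hi))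
  · intro i hi
    have htbi := key i hi
    have habi := hab i hi
    have hawi := haw i hi
    obtain ⟨h1, h2⟩ := htb i hi
    have hl1 : ab i / η ≤ tb i := le_trans (le_max_left _ _) h1
    have hl2 : tbw / (η * aw i) ≤ tb i := le_trans (le_max_right _ _) h1
    have hr1 : tb i ≤ η * ab i := le_trans h2 (min_le_left _ _)
    have hr2 : tb i ≤ η * tbw / aw i := le_trans h2 (min_le_right _ _)
    refine ⟨?_, ?_, ?_, ?_⟩
    · rw [div_le_iff₀ htbi]
      calc ab i = (ab i / η) * η := by field_simp
        _ ≤ tb i * η := by nlinarith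
        _ = η * tb i := mul_comm _ _
    · rw [div_le_iff₀ habi]
      linarith [mul_comm η (ab i)]
    · rw [htw i hi, div_div_eq_mul_div, div_le_iff₀ htbw]
      have := (le_div_iff₀ hawi).mp hr2
      nlinarith
    · rw [htw i hi, div_div, div_le_iff₀ (mul_pos htbi hawi)]
      have := (div_le_iff₀ (mul_pos hη0 hawi)).mp hl2
      nlinarith
end

section
/- For a_{bw} ≥ 1, the consistency index CI = max(a_{bw}^{1/3}, a_{bw}^{1/2}) equals a_{bw}^{1/2}, and hence the consistency ratio CR = ε*/a_{bw}^{1/2} satisfies 0 < CR ≤ 1 (equivalently, 1 ≤ ε* ≤ a_{bw}^{1/2}) whenever all comparison values a_{bi}, a_{iw} lie in [1, a_{bw}]. -/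
theorem consistency_ratio_normalized
    {ι : Type*} (D : Finset ι) (hD : D.Nonempty)
    (ab aw : ι → ℝ) (abw : ℝ) (habw : 1 ≤ abw)
    (hab : ∀ i ∈ D, ab i ∈ Set.Icc 1 abw) (haw : ∀ i ∈ D, aw i ∈ Set.Icc 1 abw)
    (ε : ℝ)
    (hε : ε = D.sup' hD (fun i =>
      max ((ab i * aw i / abw) ^ ((1 : ℝ) / 3))
        (max ((abw / (ab i * aw i)) ^ ((1 : ℝ) / 3))
          (D.sup' hD (fun j =>
            max ((ab i * aw i / (ab j * aw j)) ^ ((1 : ℝ) / 4))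
              ((ab j * aw j / (ab i * aw i)) ^ ((1 : ℝ) / 4))))))) :
    max (abw ^ ((1 : ℝ) / 3)) (abw ^ ((1 : ℝ) / 2)) = abw ^ ((1 : ℝ) / 2) ∧
    1 ≤ ε ∧ ε ≤ abw ^ ((1 : ℝ) / 2) ∧
    0 < ε / abw ^ ((1 : ℝ) / 2) ∧ ε / abw ^ ((1 : ℝ) / 2) ≤ 1 := by
  have habw0 : (0 : ℝ) < abw := lt_of_lt_of_le one_pos habw
  have hmax : max (abw ^ ((1 : ℝ) / 3)) (abw ^ ((1 : ℝ) / 2)) = abw ^ ((1 : ℝ) / 2) :=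
    max_eq_right (Real.rpow_le_rpow_of_exponent_le habw (by norm_num))
  have hp : ∀ i ∈ D, 1 ≤ ab i * aw i ∧ ab i * aw i ≤ abw * abw := by
    intro i hi
    obtain ⟨h1, h2⟩ := hab i hi
    obtain ⟨h3, h4⟩ := haw i hi
    constructor
    · nlinarith
    · nlinarith
  have hr : (0 : ℝ) < abw ^ ((1 : ℝ) / 2) := Real.rpow_pos_of_pos habw0 _
  have h13 : abw ^ ((1 : ℝ) / 3) ≤ abw ^ ((1 : ℝ) / 2) :=
    Real.rpow_le_rpow_of_exponent_le habw (by norm_num)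
  have hsq : (abw * abw) ^ ((1 : ℝ) / 4) = abw ^ ((1 : ℝ) / 2) := by
    have h2 : abw * abw = abw ^ (2 : ℝ) := by rw [Real.rpow_two, sq]
    rw [h2, ← Real.rpow_mul habw0.le]
    norm_num
  -- upper bound
  have hub : ε ≤ abw ^ ((1 : ℝ) / 2) := by
    rw [hε]
    apply Finset.sup'_le
    intro i hi
    obtain ⟨hpi1, hpi2⟩ := hp i hi
    have hpi0 : (0 : ℝ) < ab i * aw i := lt_of_lt_of_le one_pos hpi1
    refine max_le ?_ (max_le ?_ ?_)
    · calc (ab i * aw i / abw) ^ ((1 : ℝ) / 3)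
          ≤ abw ^ ((1 : ℝ) / 3) := by
            apply Real.rpow_le_rpow (by positivity) _ (by norm_num)
            rw [div_le_iff₀ habw0]; nlinarith
        _ ≤ abw ^ ((1 : ℝ) / 2) := h13
    · calc (abw / (ab i * aw i)) ^ ((1 : ℝ) / 3)
          ≤ abw ^ ((1 : ℝ) / 3) := by
            apply Real.rpow_le_rpow (by positivity) _ (by norm_num)
            rw [div_le_iff₀ hpi0]; nlinarith
        _ ≤ abw ^ ((1 : ℝ) / 2) := h13
    · apply Finset.sup'_le
      intro j hj
      obtain ⟨hpj1, hpj2⟩ := hp j hj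
      have hpj0 : (0 : ℝ) < ab j * aw j := lt_of_lt_of_le one_pos hpj1
      refine max_le ?_ ?_
      · rw [← hsq]
        apply Real.rpow_le_rpow (by positivity) _ (by norm_num)
        rw [div_le_iff₀ hpj0]; nlinarith
      · rw [← hsq]
        apply Real.rpow_le_rpow (by positivity) _ (by norm_num)
        rw [div_le_iff₀ hpi0]; nlinarith
  -- lower bound
  have hlb : 1 ≤ ε := by
    have hex := hD
    obtain ⟨i, hi⟩ := hex
    rw [hε]
    have h1 : (1 : ℝ) ≤ (ab i * aw i / (ab i * aw i)) ^ ((1 : ℝ) / 4) := by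
      obtain ⟨hpi1, _⟩ := hp i hi
      have hpi0 : (0 : ℝ) < ab i * aw i := lt_of_lt_of_le one_pos hpi1
      rw [div_self hpi0.ne', Real.one_rpow]
    refine le_trans ?_ (Finset.le_sup' _ hi)
    refine le_trans ?_ (le_max_right _ _)
    refine le_trans ?_ (le_max_right _ _)
    refine le_trans ?_ (Finset.le_sup' _ hi)
    exact le_max_of_le_left h1
  refine ⟨hmax, hlb, hub, by positivity, ?_⟩
  rw [div_le_one hr]; exact hub
end
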